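/- The Repeated Selection Model RSM(σ, Π, p) with preference probabilities p(i) = 1 for all i and selection probabilities Π(i,j) = φ^{j−1} / ∑_{k=1}^{m−i+1} φ^{k−1} (for φ ∈ (0,1]) generates total orders, and the probability it generates a ranking τ equals the Mallows probability φ^{dist(σ,τ)}/Z_{φ,m}. -/
import Mathlib


/-- Kendall-tau distance between two rankings (item ↦ position, 0-based). -/
def kendallTau {m : ℕ} (σ τ : Equiv.Perm (Fin m)) : ℕ :=
  (Finset.univ.filter
    (fun p : Fin m × Fin m => σ p.1 < σ p.2 ∧ τ p.2 < τ p.1)).card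

/-- Theorem 4.3: With preference probabilities `p ≡ 1`,
`RSM(σ,Π,p)` generates total orders, the ranking `τ` being produced with probability
`∏_i Π(i, j_i)` where `j_i` is the position (here 0-based: the numerator exponent)
of the `i`-th selected item `τ⁻¹(i)` among the items still remaining at step `i`
(those of τ-rank `≥ i`), listed in σ-order, and
`Π(i,j) = φ^{j-1} / ∑_{k=1}^{m-i+1} φ^{k-1}`.
This probability equals the Mallows probability `φ^{dist(σ,τ)}/Z_{φ,m}`. -/
theorem rsm_eq_mallows {m : ℕ} (φ : ℝ) (hφ0 : 0 < φ) (hφ1 : φ ≤ 1)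
    (σ τ : Equiv.Perm (Fin m)) :
    (∏ i : Fin m,
        φ ^ ((Finset.univ.filter
              (fun x : Fin m => i ≤ τ x ∧ σ x < σ (τ.symm i))).card) /
          (∑ k ∈ Finset.range (m - (i : ℕ)), φ ^ k)) =
    φ ^ kendallTau σ τ /
      (∏ k ∈ Finset.range m, ∑ j ∈ Finset.range (k + 1), φ ^ j) := by
  rw [Finset.prod_div_distrib]
  congr 1
  · -- numerators
    rw [Finset.prod_pow_eq_pow_sum]
    congr 1
    -- sum of fiber cards equals kendallTau
    rw [kendallTau,
      Finset.card_eq_sum_card_fiberwise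
        (f := fun p : Fin m × Fin m => τ p.2) (t := Finset.univ)
        (fun p _ => Finset.mem_univ _)]
    apply Finset.sum_congr rfl
    intro i _
    symm
    apply Finset.card_bij (fun p _ => p.1)
    · intro p hp
      simp only [Finset.mem_filter, Finset.mem_univ, true_and] at hp ⊢
      obtain ⟨⟨h1, h2⟩, h3⟩ := hp
      subst h3
      exact ⟨le_of_lt h2, by simpa using h1⟩
    · intro p hp q hq hpq
      simp only [Finset.mem_filter, Finset.mem_univ, true_and] at hp hq
      have : p.2 = q.2 := by
        have := hp.2; have := hq.2
        apply τ.injective; rw [hp.2, hq.2]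
      exact Prod.ext hpq this
    · intro x hx
      simp only [Finset.mem_filter, Finset.mem_univ, true_and] at hx
      refine ⟨(x, τ.symm i), ?_, rfl⟩
      simp only [Finset.mem_filter, Finset.mem_univ, true_and, Equiv.apply_symm_apply]
      have hne : x ≠ τ.symm i := by
        intro h; rw [h] at hx; exact lt_irrefl _ hx.2
      have : i < τ x := lt_of_le_of_ne hx.1 (by
        intro h; exact hne (by rw [h, Equiv.symm_apply_apply]))
      exact ⟨⟨by simpa using hx.2, this⟩, trivial⟩
  · -- denominators
    rw [Fin.prod_univ_eq_prod_range (fun i => ∑ k ∈ Finset.range (m - i), φ ^ k) m,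
      ← Finset.prod_range_reflect (fun j => ∑ k ∈ Finset.range (j + 1), φ ^ k) m]
    apply Finset.prod_congr rfl
    intro i hi
    simp only [Finset.mem_range] at hi
    have : m - i = m - 1 - i + 1 := by omega
    rw [this]
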